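/- Let N = N(s_0 | a_1/b_1, …, a_m/b_m) be an n×n star-shaped intersection matrix built from an integer s_0 ≥ 1 and m ≥ 3 Hirzebruch–Jung chain matrices N_1, …, N_m with associated data (a_j, b_j, R_j). Let p be a prime and assume the discriminant group Φ_N is killed by p (i.e., p·x = 0 for every x ∈ Φ_N). If p divides a_j for some j, then the class of e_{v_0} (the node) is trivial in Φ_N. -/

import Mathlib

open Matrix BigOperators

lemma star_chain_dvd (ℓ : ℕ) (M : Matrix (Fin (ℓ+1)) (Fin (ℓ+1)) ℤ)
    (hMadj : ∀ i i' : Fin (ℓ+1), ((i:ℕ)+1 = (i':ℕ) ∨ (i':ℕ)+1 = (i:ℕ)) → M i i' = 1)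
    (hMoff : ∀ i i' : Fin (ℓ+1), i ≠ i' → (i:ℕ)+1 ≠ (i':ℕ) → (i':ℕ)+1 ≠ (i:ℕ) → M i i' = 0)
    (a : ℤ) (R : Fin (ℓ+1) → ℤ)
    (hRrel : M.mulVec R = fun i => if i = 0 then -a else 0)
    (p : ℤ) (hpa : p ∣ a) (hp0 : p ∣ R 0) :
    ∀ i, p ∣ R i := by
  have key : ∀ k : ℕ, ∀ i : Fin (ℓ+1), (i:ℕ) = k → p ∣ R i := by
    intro k
    induction k using Nat.strong_induction_on with
    | _ k IH =>
      rcases k with _ | k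
      · intro i hik
        have hi0 : i = 0 := Fin.ext (by simpa using hik)
        rw [hi0]; exact hp0
      · intro i hik
        have hklt : k < ℓ + 1 := by have := i.isLt; omega
        set i₀ : Fin (ℓ+1) := ⟨k, hklt⟩ with hi₀
        have hval₀ : (i₀ : ℕ) = k := rfl
        have hsum : ∑ i', M i₀ i' * R i' = if i₀ = 0 then -a else 0 := by
          have := congrFun hRrel i₀
          simpa [Matrix.mulVec, dotProduct] using this
        have hdtot : p ∣ ∑ i', M i₀ i' * R i' := by
          rw [hsum]
          split
          · exact dvd_neg.mpr hpa
          · exact dvd_zero p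
        have hmem : i ∈ Finset.univ := Finset.mem_univ i
        have hsplit : ∑ i' ∈ Finset.univ.erase i, M i₀ i' * R i' + M i₀ i * R i
            = ∑ i', M i₀ i' * R i' := Finset.sum_erase_add _ _ hmem
        have hderase : p ∣ ∑ i' ∈ Finset.univ.erase i, M i₀ i' * R i' := by
          apply Finset.dvd_sum
          intro i' hi'
          have hne : i' ≠ i := Finset.ne_of_mem_erase hi'
          by_cases hle : (i' : ℕ) ≤ k
          · exact Dvd.dvd.mul_left (IH i'.val (by omega) i' rfl) _
          · have hvne : (i' : ℕ) ≠ k + 1 := fun h => hne (Fin.ext (by omega))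
            have h0 : M i₀ i' = 0 := by
              apply hMoff
              · intro h; apply hne; exact Fin.ext (by omega)
              · omega
              · omega
            simp [h0]
        have : p ∣ M i₀ i * R i := by
          have h2 : M i₀ i * R i = (∑ i', M i₀ i' * R i')
              - ∑ i' ∈ Finset.univ.erase i, M i₀ i' * R i' := by linarith [hsplit]
          rw [h2]; exact dvd_sub hdtot hderase
        have hadj : M i₀ i = 1 := hMadj i₀ i (Or.inl (by omega))
        rwa [hadj, one_mul] at this
  intro i; exact key i.val i rfl

/-- **Star-shaped intersection matrices: triviality of the node class.**
Let `N = N(s₀ | a₁/b₁, …, a_m/b_m)` be a star-shaped intersection matrix and `p` a prime.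
If the discriminant group `Φ_N` is killed by `p` and `p` divides some `a_j`, then the class of
the standard basis vector of the node `v₀` is trivial in `Φ_N`. -/
theorem star_shaped_node_trivial
    (m : ℕ) (hm : 3 ≤ m)
    (ℓ : Fin m → ℕ)
    (M : ∀ j : Fin m, Matrix (Fin (ℓ j + 1)) (Fin (ℓ j + 1)) ℤ)
    (hMdiag : ∀ j i, M j i i ≤ -2)
    (hMadj : ∀ (j : Fin m) (i i' : Fin (ℓ j + 1)),
      ((i : ℕ) + 1 = (i' : ℕ) ∨ (i' : ℕ) + 1 = (i : ℕ)) → M j i i' = 1)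
    (hMoff : ∀ (j : Fin m) (i i' : Fin (ℓ j + 1)),
      i ≠ i' → (i : ℕ) + 1 ≠ (i' : ℕ) → (i' : ℕ) + 1 ≠ (i : ℕ) → M j i i' = 0)
    (a : Fin m → ℤ) (ha : ∀ j, 1 ≤ a j)
    (R : ∀ j : Fin m, Fin (ℓ j + 1) → ℤ)
    (hRpos : ∀ j i, 0 < R j i)
    (hRlast : ∀ j, R j (Fin.last (ℓ j)) = 1)
    (hRrel : ∀ j, (M j).mulVec (R j) = fun i => if i = 0 then -(a j) else 0)
    (s₀ : ℤ) (hs₀ : 1 ≤ s₀)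
    (N : Matrix (Option ((j : Fin m) × Fin (ℓ j + 1)))
                (Option ((j : Fin m) × Fin (ℓ j + 1))) ℤ)
    (hN₀ : N none none = -s₀)
    (hN₁ : ∀ (j : Fin m) (i : Fin (ℓ j + 1)),
      N none (some ⟨j, i⟩) = if i = 0 then 1 else 0)
    (hN₂ : ∀ (j : Fin m) (i : Fin (ℓ j + 1)),
      N (some ⟨j, i⟩) none = if i = 0 then 1 else 0)
    (hN₃ : ∀ (j : Fin m) (i i' : Fin (ℓ j + 1)),
      N (some ⟨j, i⟩) (some ⟨j, i'⟩) = M j i i')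
    (hN₄ : ∀ (j j' : Fin m) (i : Fin (ℓ j + 1)) (i' : Fin (ℓ j' + 1)),
      j ≠ j' → N (some ⟨j, i⟩) (some ⟨j', i'⟩) = 0)
    (hNdef : ∀ v : Option ((j : Fin m) × Fin (ℓ j + 1)) → ℚ, v ≠ 0 →
      v ⬝ᵥ (N.map (Int.cast : ℤ → ℚ)).mulVec v < 0)
    (p : ℕ) (hp : p.Prime)
    (hkilled : ∀ x : (Option ((j : Fin m) × Fin (ℓ j + 1)) → ℤ) ⧸ LinearMap.range N.mulVecLin,
      (p : ℤ) • x = 0)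
    (hdvd : ∃ j : Fin m, (p : ℤ) ∣ a j) :
    (Submodule.Quotient.mk
        (Pi.single (none : Option ((j : Fin m) × Fin (ℓ j + 1))) (1 : ℤ)) :
      (Option ((j : Fin m) × Fin (ℓ j + 1)) → ℤ) ⧸ LinearMap.range N.mulVecLin) = 0 := by
  classical
  obtain ⟨j, hja⟩ := hdvd
  set b : ℤ := R j 0 with hbdef
  -- p does not divide b
  have hpb : ¬ (p:ℤ) ∣ b := by
    intro hpb
    have hall := star_chain_dvd (ℓ j) (M j) (hMadj j) (hMoff j) (a j) (R j) (hRrel j)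
      (p:ℤ) hja hpb
    have h1 : (p:ℤ) ∣ 1 := by rw [← hRlast j]; exact hall _
    have h2 : (p:ℤ) ≤ 1 := Int.le_of_dvd one_pos h1
    have h3 : 2 ≤ p := hp.two_le
    omega
  -- the witness vector
  set y : Option ((j' : Fin m) × Fin (ℓ j' + 1)) → ℤ :=
    fun o => match o with
      | none => 0
      | some x => if hx : x.1 = j then R x.1 x.2 else 0 with hy
  set E : (Option ((j : Fin m) × Fin (ℓ j + 1)) → ℤ) ⧸ LinearMap.range N.mulVecLin :=
    Submodule.Quotient.mk (Pi.single (none : Option ((j : Fin m) × Fin (ℓ j + 1))) (1 : ℤ))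
    with hE
  set F : (Option ((j : Fin m) × Fin (ℓ j + 1)) → ℤ) ⧸ LinearMap.range N.mulVecLin :=
    Submodule.Quotient.mk (Pi.single (some ⟨j, (0 : Fin (ℓ j + 1))⟩) (1 : ℤ)) with hF
  have hNy : N.mulVec y = b • Pi.single (none : Option ((j : Fin m) × Fin (ℓ j + 1))) (1:ℤ)
      + (-(a j)) • Pi.single (some ⟨j, (0 : Fin (ℓ j + 1))⟩) (1:ℤ) := by
    funext o
    cases o with
    | none =>
      have : N.mulVec y none = ∑ x : (j' : Fin m) × Fin (ℓ j' + 1),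
          N none (some x) * y (some x) := by
        simp [Matrix.mulVec, dotProduct, Fintype.sum_option, hy]
      rw [this, ← Finset.univ_sigma_univ, Finset.sum_sigma]
      simp [hy, hN₁, ite_mul, Finset.sum_ite_eq', Pi.single_apply, hbdef]
    | some x =>
      obtain ⟨j', i⟩ := x
      have hexp : N.mulVec y (some ⟨j', i⟩) = ∑ x : (j'' : Fin m) × Fin (ℓ j'' + 1),
          N (some ⟨j', i⟩) (some x) * y (some x) := by
        simp [Matrix.mulVec, dotProduct, Fintype.sum_option, hy]
      rw [hexp, ← Finset.univ_sigma_univ, Finset.sum_sigma]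
      by_cases hjj : j' = j
      · subst hjj
        have hterm : ∀ j'' : Fin m, ∑ i'' : Fin (ℓ j'' + 1),
            N (some ⟨j', i⟩) (some ⟨j'', i''⟩) * y (some ⟨j'', i''⟩)
            = if j'' = j' then (if i = 0 then -(a j') else 0) else 0 := by
          intro j''
          by_cases h : j'' = j'
          · subst h
            have : ∑ i'' : Fin (ℓ j'' + 1),
                N (some ⟨j'', i⟩) (some ⟨j'', i''⟩) * y (some ⟨j'', i''⟩)
                = ∑ i'' : Fin (ℓ j'' + 1), M j'' i i'' * R j'' i'' := by
              apply Finset.sum_congr rfl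
              intro i'' _
              simp [hy, hN₃]
            rw [this]
            have := congrFun (hRrel j'') i
            simpa [Matrix.mulVec, dotProduct] using this
          · have : ∀ i'' : Fin (ℓ j'' + 1),
                N (some ⟨j', i⟩) (some ⟨j'', i''⟩) * y (some ⟨j'', i''⟩) = 0 := by
              intro i''
              simp [hy, fun h' => h h', hN₄ j' j'' i i'' (fun h' => h h'.symm)]
            simp [this, h]
        rw [Finset.sum_congr rfl (fun j'' _ => hterm j'')]
        simp [Finset.sum_ite_eq', Pi.single_apply, Sigma.mk.inj_iff]
        split <;> simp
      · have hterm : ∀ j'' : Fin m, ∑ i'' : Fin (ℓ j'' + 1),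
            N (some ⟨j', i⟩) (some ⟨j'', i''⟩) * y (some ⟨j'', i''⟩) = 0 := by
          intro j''
          apply Finset.sum_eq_zero
          intro i'' _
          by_cases h : j'' = j
          · subst h
            rw [hN₄ j' j'' i i'' hjj]
            ring
          · simp [hy, h]
        rw [Finset.sum_congr rfl (fun j'' _ => hterm j'')]
        simp [Pi.single_apply, Sigma.mk.inj_iff, hjj]
  have hmem : (b • Pi.single (none : Option ((j : Fin m) × Fin (ℓ j + 1))) (1:ℤ)
      + (-(a j)) • Pi.single (some ⟨j, (0 : Fin (ℓ j + 1))⟩) (1:ℤ))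
      ∈ LinearMap.range N.mulVecLin := ⟨y, by rw [Matrix.mulVecLin_apply, hNy]⟩
  have hq : b • E + (-(a j)) • F = 0 := by
    rw [hE, hF, ← Submodule.Quotient.mk_smul, ← Submodule.Quotient.mk_smul,
      ← Submodule.Quotient.mk_add]
    exact (Submodule.Quotient.mk_eq_zero _).mpr hmem
  have hFa : (a j) • F = 0 := by
    obtain ⟨c, hc⟩ := hja
    rw [hc, mul_smul]
    exact hkilled _
  have hbE : b • E = 0 := by
    have h := hq
    rw [neg_smul, add_neg_eq_zero] at h
    rw [h, hFa]
  have hpE : (p:ℤ) • E = 0 := hkilled E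
  have hcop : IsCoprime ((p:ℕ):ℤ) b :=
    (Nat.prime_iff_prime_int.mp hp).coprime_iff_not_dvd.mpr hpb
  obtain ⟨u, v, huv⟩ := hcop
  calc E = (u * (p:ℤ) + v * b) • E := by rw [huv, one_smul]
    _ = u • ((p:ℤ) • E) + v • (b • E) := by rw [add_smul, mul_smul, mul_smul]
    _ = 0 := by rw [hpE, hbE, smul_zero, smul_zero, add_zero]
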